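/- In the commutative ℚ-algebra with generators u_{ij} = −u_{ji} for 1 ≤ i < j ≤ n and relations u_{ij}² = 0 together with the cycle relations u_{i_1i_2}u_{i_2i_3}···u_{i_{m−1}i_m} + u_{i_2i_3}···u_{i_mi_1} + ··· + u_{i_mi_1}···u_{i_{m−2}i_{m−1}} = 0 for every cycle (i_1,...,i_m) of distinct indices, any monomial whose set of edges {i,j} contains a cycle of the complete graph K_n is equal to zero. -/

import Mathlib

open MvPolynomial in
/-- The defining relations of the Artinian Orlik–Terao algebra `U_{K_n}` of the complete
graph: `u_{ij} = -u_{ji}`, `u_{ij}² = 0`, and for every cycle `(i_1, ..., i_m)` of distinct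
indices the relation `u_{i_1i_2}···u_{i_{m-1}i_m} + u_{i_2i_3}···u_{i_mi_1} + ··· +
u_{i_mi_1}···u_{i_{m-2}i_{m-1}} = 0`. -/
def OTKnRels (n : ℕ) : Set (MvPolynomial (Fin n × Fin n) ℚ) :=
  {f | (∃ i j : Fin n, i ≠ j ∧ f = X (i, j) + X (j, i)) ∨
       (∃ i j : Fin n, i ≠ j ∧ f = X (i, j) * X (i, j)) ∨
       (∃ (m : ℕ) (is : ℕ → Fin n), 3 ≤ m ∧
         (∀ a b, a < m → b < m → is a = is b → a = b) ∧
         f = ∑ p ∈ Finset.range m, ∏ q ∈ Finset.range (m - 1),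
               X (is ((p + q) % m), is ((p + q + 1) % m)))}

set_option synthInstance.maxHeartbeats 1000000
set_option maxHeartbeats 1000000
set_option linter.unusedVariables false

/-- The Artinian Orlik–Terao algebra `U_{K_n}`. -/
abbrev OTKn (n : ℕ) := MvPolynomial (Fin n × Fin n) ℚ ⧸ Ideal.span (OTKnRels n)

namespace OTKnAux
open MvPolynomial

variable {n : ℕ}

noncomputable def x (p : Fin n × Fin n) : OTKn n :=
  Ideal.Quotient.mk (Ideal.span (OTKnRels n)) (X p)

lemma mk_mem_zero {f : MvPolynomial (Fin n × Fin n) ℚ} (hf : f ∈ OTKnRels n) :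
    Ideal.Quotient.mk (Ideal.span (OTKnRels n)) f = 0 :=
  Ideal.Quotient.eq_zero_iff_mem.mpr (Ideal.subset_span hf)

lemma sq_zero {i j : Fin n} (h : i ≠ j) : x (i, j) * x (i, j) = 0 := by
  have := mk_mem_zero (n := n) (f := X (i, j) * X (i, j)) (Or.inr (Or.inl ⟨i, j, h, rfl⟩))
  simpa [x] using this

lemma skew {i j : Fin n} (h : i ≠ j) : x (j, i) = - x (i, j) := by
  have := mk_mem_zero (n := n) (f := X (i, j) + X (j, i)) (Or.inl ⟨i, j, h, rfl⟩)
  rw [map_add] at this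
  exact eq_neg_of_add_eq_zero_right this

lemma sym2_mul_zero {i j : Fin n} (h : i ≠ j) {p : Fin n × Fin n}
    (hp : Sym2.mk p.1 p.2 = Sym2.mk i j) : x p * x (i, j) = 0 := by
  replace hp := (Sym2.mk_eq_mk_iff (p := p) (q := (i, j))).mp hp
  rcases hp with hp | hp
  · rw [show p = (i,j) from hp]; exact sq_zero h
  · have : p = (j, i) := by simpa [Prod.ext_iff] using hp
    rw [this, skew h]
    calc -x (i, j) * x (i, j) = -(x (i, j) * x (i, j)) := by ring
      _ = 0 := by rw [sq_zero h, neg_zero]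

lemma cycle_rel (m : ℕ) (is : ℕ → Fin n) (hm : 3 ≤ m)
    (hinj : ∀ a b, a < m → b < m → is a = is b → a = b) :
    ∑ p ∈ Finset.range m, ∏ q ∈ Finset.range (m - 1),
        x (is ((p + q) % m), is ((p + q + 1) % m)) = 0 := by
  have := mk_mem_zero (n := n) (Or.inr (Or.inr ⟨m, is, hm, hinj, rfl⟩))
  rw [map_sum] at this
  simp only [map_prod] at this
  exact this

end OTKnAux

namespace OTKnAux
variable {n : ℕ}

lemma cycle_prod_zero (m : ℕ) (is : ℕ → Fin n) (hm : 3 ≤ m)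
    (hinj : ∀ a b, a < m → b < m → is a = is b → a = b) :
    ∏ k ∈ Finset.range m, x (is k, is ((k + 1) % m)) = 0 := by
  set e : OTKn n := x (is (m - 1), is 0) with he
  have hne : is (m - 1) ≠ is 0 := fun h => by
    have := hinj _ _ (by omega) (by omega) h; omega
  have hrel := cycle_rel m is hm hinj
  set term : ℕ → OTKn n := fun p =>
    ∏ q ∈ Finset.range (m - 1), x (is ((p + q) % m), is ((p + q + 1) % m)) with hterm
  have key : ∀ p ∈ Finset.range m, p ≠ 0 → e * term p = 0 := by
    intro p hp hp0
    rw [Finset.mem_range] at hp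
    have hq : m - 1 - p ∈ Finset.range (m - 1) := by
      rw [Finset.mem_range]; omega
    simp only [hterm]
    rw [← Finset.mul_prod_erase _ _ hq]
    have h1 : (p + (m - 1 - p)) % m = m - 1 := by
      rw [show p + (m - 1 - p) = m - 1 from by omega]
      exact Nat.mod_eq_of_lt (by omega)
    have h2 : (p + (m - 1 - p) + 1) % m = 0 := by
      rw [show p + (m - 1 - p) + 1 = m from by omega]
      exact Nat.mod_self m
    rw [h1, h2, ← mul_assoc, he]
    rw [sq_zero hne, zero_mul]
  have h0 : e * term 0 = ∏ k ∈ Finset.range m, x (is k, is ((k + 1) % m)) := by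
    have hs := Finset.prod_range_succ (fun k => x (is k, is ((k + 1) % m))) (m - 1)
    rw [show m - 1 + 1 = m from by omega] at hs
    rw [hs]
    rw [Nat.mod_self]
    simp only [hterm]
    have hA : (∏ q ∈ Finset.range (m - 1), x (is ((0 + q) % m), is ((0 + q + 1) % m)))
        = ∏ q ∈ Finset.range (m - 1), x (is q, is (q + 1)) :=
      Finset.prod_congr rfl (fun q hq => by
        rw [Finset.mem_range] at hq
        rw [show (0 + q) % m = q from by
            rw [Nat.zero_add]; exact Nat.mod_eq_of_lt (by omega),
          show (0 + q + 1) % m = q + 1 from by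
            rw [Nat.zero_add]; exact Nat.mod_eq_of_lt (by omega)])
    have hB : (∏ k ∈ Finset.range (m - 1), x (is k, is ((k + 1) % m)))
        = ∏ q ∈ Finset.range (m - 1), x (is q, is (q + 1)) :=
      Finset.prod_congr rfl (fun q hq => by
        rw [Finset.mem_range] at hq
        rw [show (q + 1) % m = q + 1 from Nat.mod_eq_of_lt (by omega)])
    rw [hA, hB, mul_comm]
  have hsum : ∑ p ∈ Finset.range m, e * term p = e * term 0 :=
    Finset.sum_eq_single_of_mem 0 (Finset.mem_range.mpr (by omega)) key
  calc ∏ k ∈ Finset.range m, x (is k, is ((k + 1) % m))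
      = e * term 0 := h0.symm
    _ = ∑ p ∈ Finset.range m, e * term p := hsum.symm
    _ = e * ∑ p ∈ Finset.range m, term p := (Finset.mul_sum _ _ _).symm
    _ = 0 := by rw [hrel, mul_zero]

end OTKnAux

lemma walk_support_getElem {V : Type*} {G : SimpleGraph V} {u v : V} (p : G.Walk u v)
    (k : ℕ) (hk : k < p.support.length) : p.support[k] = p.getVert k := by
  induction p generalizing k with
  | nil => simp at hk; simp [hk]
  | cons h q ih =>
    cases k with
    | zero => simp
    | succ k =>
      simp only [SimpleGraph.Walk.support_cons, SimpleGraph.Walk.getVert_cons_succ]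
      rw [List.getElem_cons_succ]
      exact ih k (by simp at hk ⊢; omega)

open OTKnAux MvPolynomial

/-- In `U_{K_n}`, any monomial (product of distinct generators) whose set of edges
contains a graph cycle equals zero. -/
theorem otKn_monomial_with_cycle_eq_zero {n : ℕ} (L : List (Fin n × Fin n))
    (hloop : ∀ p ∈ L, p.1 ≠ p.2)
    (hdist : (L.map fun p => Sym2.mk p.1 p.2).Nodup)
    (hcyc : ∃ (v : Fin n)
      (c : (SimpleGraph.fromEdgeSet {s | ∃ p ∈ L, s = Sym2.mk p.1 p.2}).Walk v v),
      c.IsCycle) :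
    Ideal.Quotient.mk (Ideal.span (OTKnRels n))
      ((L.map fun p => MvPolynomial.X p).prod) = 0 := by
  classical
  obtain ⟨v, c, hc⟩ := hcyc
  set m := c.length with hm
  have hm3 : 3 ≤ m := hc.three_le_length
  set is : ℕ → Fin n := fun k => c.getVert k with his
  -- getVert vs support
  have hsupp := walk_support_getElem c
  have hslen : c.support.length = m + 1 := by rw [SimpleGraph.Walk.length_support]
  have htlen : c.support.tail.length = m := by simp [hslen]
  have htail : ∀ a b, 1 ≤ a → a ≤ m → 1 ≤ b → b ≤ m → is a = is b → a = b := by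
    intro a b ha1 ham hb1 hbm hab
    have ha' : a - 1 + 1 = a := by omega
    have hb' : b - 1 + 1 = b := by omega
    have hga : c.support.tail[a-1]'(by omega) = is a := by
      simp only [List.getElem_tail, hsupp, his, ha']
    have hgb : c.support.tail[b-1]'(by omega) = is b := by
      simp only [List.getElem_tail, hsupp, his, hb']
    have := (hc.support_nodup.getElem_inj_iff).mp (hga.trans (hab.trans hgb.symm))
    omega
  have hv0 : is 0 = is m := by
    simp only [his]
    rw [SimpleGraph.Walk.getVert_zero, SimpleGraph.Walk.getVert_length]
  have hinj : ∀ a b, a < m → b < m → is a = is b → a = b := by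
    intro a b ha hb hab
    rcases Nat.eq_zero_or_pos a with rfl | ha1
    · rcases Nat.eq_zero_or_pos b with rfl | hb1
      · rfl
      · have := htail m b (by omega) le_rfl hb1 (by omega) (hv0.symm.trans hab)
        omega
    · rcases Nat.eq_zero_or_pos b with rfl | hb1
      · have := htail a m ha1 (by omega) (by omega) le_rfl (hab.trans hv0)
        omega
      · exact htail a b ha1 (by omega) hb1 (by omega) hab
  -- adjacency of consecutive cycle vertices
  have hadj : ∀ k, k < m →
      (SimpleGraph.fromEdgeSet {s | ∃ p ∈ L, s = Sym2.mk p.1 p.2}).Adj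
        (is k) (is ((k + 1) % m)) := by
    intro k hk
    rcases Nat.lt_or_ge (k + 1) m with h | h
    · rw [Nat.mod_eq_of_lt h]
      exact c.adj_getVert_succ hk
    · have hkm : k + 1 = m := by omega
      rw [hkm, Nat.mod_self, hv0, ← hkm]
      exact c.adj_getVert_succ hk
  have hne : ∀ k, k < m → is k ≠ is ((k + 1) % m) := fun k hk => (hadj k hk).ne
  have hedge : ∀ k, k < m → ∃ p ∈ L,
      Sym2.mk p.1 p.2 = Sym2.mk (is k) (is ((k + 1) % m)) := by
    intro k hk
    have := ((SimpleGraph.fromEdgeSet_adj _).mp (hadj k hk)).1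
    obtain ⟨p, hpL, hp⟩ := this
    exact ⟨p, hpL, hp.symm⟩
  -- choose representatives
  have hex : ∀ k, ∃ p : Fin n × Fin n, k < m →
      p ∈ L ∧ Sym2.mk p.1 p.2 = Sym2.mk (is k) (is ((k + 1) % m)) := by
    intro k
    by_cases hk : k < m
    · obtain ⟨p, hpL, hp⟩ := hedge k hk
      exact ⟨p, fun _ => ⟨hpL, hp⟩⟩
    · exact ⟨(v, v), fun h => absurd h hk⟩
  choose P hP using hex
  -- distinctness of cycle edges
  have hedist : ∀ k l, k < m → l < m →
      Sym2.mk (is k) (is ((k + 1) % m)) = Sym2.mk (is l) (is ((l + 1) % m)) → k = l := by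
    intro k l hk hl h
    replace h := (Sym2.mk_eq_mk_iff (p := (is k, is ((k + 1) % m)))
      (q := (is l, is ((l + 1) % m)))).mp h
    rcases h with h | h
    · exact hinj k l hk hl (congrArg Prod.fst h)
    · have h1 : is k = is ((l + 1) % m) := congrArg Prod.fst h
      have h2 : is ((k + 1) % m) = is l := congrArg Prod.snd h
      have hk1 : k = (l + 1) % m := hinj _ _ hk (Nat.mod_lt _ (by omega)) h1
      have hl1 : (k + 1) % m = l := hinj _ _ (Nat.mod_lt _ (by omega)) hl h2
      exfalso
      rcases Nat.lt_or_ge (k + 1) m with hc1 | hc1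
      · rw [Nat.mod_eq_of_lt hc1] at hl1
        rcases Nat.lt_or_ge (l + 1) m with hc2 | hc2
        · rw [Nat.mod_eq_of_lt hc2] at hk1; omega
        · have : l + 1 = m := by omega
          rw [this, Nat.mod_self] at hk1; omega
      · have : k + 1 = m := by omega
        rw [this, Nat.mod_self] at hl1
        subst hl1
        rw [Nat.mod_eq_of_lt (by omega)] at hk1
        omega
  have hPinj : ∀ k ∈ Finset.range m, ∀ l ∈ Finset.range m, P k = P l → k = l := by
    intro k hk l hl hkl
    rw [Finset.mem_range] at hk hl
    have h1 := (hP k hk).2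
    have h2 := (hP l hl).2
    rw [hkl] at h1
    exact hedist k l hk hl (h1.symm.trans h2)
  -- the monomial as a product over a finset
  have hLnodup : L.Nodup := hdist.of_map
  rw [map_list_prod]
  have : (List.map (fun p => MvPolynomial.X p) L).map
      (Ideal.Quotient.mk (Ideal.span (OTKnRels n))) = L.map (fun p => x p) := by
    rw [List.map_map]; rfl
  rw [this, ← List.prod_toFinset _ hLnodup]
  set T : Finset (Fin n × Fin n) := (Finset.range m).image P with hT
  have hTsub : T ⊆ L.toFinset := by
    intro p hp
    rw [hT, Finset.mem_image] at hp
    obtain ⟨k, hk, rfl⟩ := hp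
    rw [Finset.mem_range] at hk
    exact List.mem_toFinset.mpr (hP k hk).1
  rw [← Finset.prod_sdiff hTsub]
  have hTzero : ∏ p ∈ T, x p = 0 := by
    rw [hT, Finset.prod_image hPinj]
    set ε : ℕ → OTKn n := fun k =>
      if P k = (is k, is ((k + 1) % m)) then 1 else -1 with hε
    have hfac : ∀ k ∈ Finset.range m,
        x (P k) = ε k * x (is k, is ((k + 1) % m)) := by
      intro k hk
      rw [Finset.mem_range] at hk
      have h := (hP k hk).2
      replace h := (Sym2.mk_eq_mk_iff (p := ((P k).1, (P k).2))
        (q := (is k, is ((k + 1) % m)))).mp h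
      rcases h with h | h
      · have hPk : P k = (is k, is ((k + 1) % m)) := Prod.mk.eta.symm.trans h
        simp [hε, hPk]
      · have hPk : P k = (is ((k + 1) % m), is k) := Prod.mk.eta.symm.trans h
        have hnePk : P k ≠ (is k, is ((k + 1) % m)) := by
          rw [hPk]
          intro hcon
          have h2 : is ((k + 1) % m) = is k := congrArg Prod.fst hcon
          exact hne k hk h2.symm
        rw [hε]; simp only [if_neg hnePk]
        rw [hPk, skew (hne k hk)]
        ring
    rw [Finset.prod_congr rfl hfac, Finset.prod_mul_distrib]
    rw [cycle_prod_zero m is hm3 hinj, mul_zero]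
  rw [hTzero, mul_zero]
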